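/- Let k be a positive integer and let w_k(y) = ∫₀^y u_k(t) dt. Then ∫₀¹ w_k(y)² dy = 1/(12k²). Consequently the one-dimensional nonlocal energy of the k-jump configuration is E₀^γ(u_k) = k + γ/(12k²) for every γ ≥ 0. -/

import Mathlib

open MeasureTheory intervalIntegral

/-- The lamellar configuration `u_k`: equals `(-1)^j` on `(y_j, y_{j+1})` where
`y_j = (2j-1)/(2k)`, `y_0 = 0`, `y_{k+1} = 1`. -/
noncomputable def uk (k : ℕ) (t : ℝ) : ℝ := (-1 : ℝ) ^ ⌊(k : ℝ) * t + 1 / 2⌋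

/-- `w_k(y) = ∫₀^y u_k(t) dt`. -/
noncomputable def wk (k : ℕ) (y : ℝ) : ℝ := ∫ t in (0 : ℝ)..y, uk k t

lemma uk_meas (k : ℕ) : Measurable (uk k) := by
  unfold uk
  exact (measurable_from_top (f := fun n : ℤ => ((-1:ℝ))^n)).comp
    (Int.measurable_floor.comp (by fun_prop))

lemma uk_abs (k : ℕ) (t : ℝ) : |uk k t| = 1 := by
  unfold uk
  rcases Int.even_or_odd (⌊(k : ℝ) * t + 1 / 2⌋) with h | h
  · rw [h.neg_one_zpow]; norm_num
  · rw [Odd.neg_one_zpow h]; norm_num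

lemma uk_int (k : ℕ) (a b : ℝ) : IntervalIntegrable (uk k) volume a b := by
  apply IntervalIntegrable.mono_fun' (g := fun _ => (1:ℝ)) intervalIntegrable_const
    (uk_meas k).aestronglyMeasurable
  filter_upwards with t
  rw [Real.norm_eq_abs, uk_abs]

lemma wk_cont (k : ℕ) : Continuous (wk k) :=
  intervalIntegral.continuous_primitive (fun a b => uk_int k a b) 0

lemma wk_sq_int (k : ℕ) (a b : ℝ) : IntervalIntegrable (fun y => (wk k y)^2) volume a b :=
  ((wk_cont k).pow 2).intervalIntegrable a b

lemma uk_one (k : ℕ) (hk : 1 ≤ k) {t : ℝ} (h0 : 0 < t) (h1 : t < 1/(2*(k:ℝ))) :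
    uk k t = 1 := by
  have hK : (0:ℝ) < k := by exact_mod_cast hk
  have hfl : ⌊(k : ℝ) * t + 1 / 2⌋ = 0 := by
    rw [Int.floor_eq_zero_iff]
    have h2 : (k:ℝ) * t < 1/2 := by
      rw [lt_div_iff₀ (by positivity)] at h1
      nlinarith
    constructor
    · nlinarith
    · norm_num; linarith
  unfold uk; rw [hfl]; norm_num

lemma uk_negone (k : ℕ) (hk : 1 ≤ k) {t : ℝ} (h0 : 1/(2*(k:ℝ)) ≤ t) (h1 : t ≤ 1/(k:ℝ)) :
    uk k t = -1 := by
  have hK : (0:ℝ) < k := by exact_mod_cast hk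
  have hl : (1:ℝ)/2 ≤ (k:ℝ) * t := by
    rw [div_le_iff₀ (by positivity)] at h0; nlinarith
  have hu : (k:ℝ) * t ≤ 1 := by
    rw [le_div_iff₀ hK] at h1; nlinarith
  have hfl : ⌊(k : ℝ) * t + 1 / 2⌋ = 1 := by
    rw [Int.floor_eq_iff]
    constructor <;> push_cast <;> linarith
  unfold uk; rw [hfl]; norm_num

lemma wk_id (k : ℕ) (hk : 1 ≤ k) {y : ℝ} (h0 : 0 ≤ y) (h1 : y ≤ 1/(2*(k:ℝ))) :
    wk k y = y := by
  have : wk k y = ∫ t in (0:ℝ)..y, (1:ℝ) := by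
    apply intervalIntegral.integral_congr_ae
    have hsub : {x : ℝ | ¬ (x ∈ Set.uIoc (0:ℝ) y → uk k x = 1)} ⊆ {1/(2*(k:ℝ))} := by
      intro x hx
      simp only [Set.mem_setOf_eq, Classical.not_imp] at hx
      obtain ⟨hmem, hne⟩ := hx
      rw [Set.uIoc_of_le h0] at hmem
      by_contra hxe
      have hxne : x ≠ 1/(2*(k:ℝ)) := fun h => hxe (by simp [h])
      exact hne (uk_one k hk hmem.1 (lt_of_le_of_ne (hmem.2.trans h1) hxne))
    exact MeasureTheory.ae_iff.mpr (measure_mono_null hsub (measure_singleton _))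
  rw [this]; simp

lemma wk_tri (k : ℕ) (hk : 1 ≤ k) {y : ℝ} (h0 : 1/(2*(k:ℝ)) ≤ y) (h1 : y ≤ 1/(k:ℝ)) :
    wk k y = 1/(k:ℝ) - y := by
  have hK : (0:ℝ) < k := by exact_mod_cast hk
  have hsplit : wk k y = wk k (1/(2*(k:ℝ))) + ∫ t in (1/(2*(k:ℝ)))..y, uk k t := by
    rw [wk, wk, intervalIntegral.integral_add_adjacent_intervals (uk_int k _ _) (uk_int k _ _)]
  have hc : ∫ t in (1/(2*(k:ℝ)))..y, uk k t = ∫ t in (1/(2*(k:ℝ)))..y, (-1:ℝ) := by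
    apply intervalIntegral.integral_congr
    intro x hx
    rw [Set.uIcc_of_le h0] at hx
    exact uk_negone k hk hx.1 (hx.2.trans h1)
  rw [hsplit, hc, wk_id k hk (by positivity) le_rfl, intervalIntegral.integral_const,
    smul_eq_mul]
  field_simp
  ring

lemma uk_shift (k : ℕ) (hk : 1 ≤ k) (t : ℝ) : uk k (t + 1/(k:ℝ)) = - uk k t := by
  have hK : (0:ℝ) < k := by exact_mod_cast hk
  have h : (k:ℝ) * (t + 1/(k:ℝ)) + 1/2 = ((k:ℝ) * t + 1/2) + 1 := by field_simp; ring
  unfold uk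
  rw [h, Int.floor_add_one, zpow_add₀ (by norm_num : (-1:ℝ) ≠ 0)]
  simp

lemma wk_perk (k : ℕ) (hk : 1 ≤ k) : wk k (1/(k:ℝ)) = 0 := by
  have hK : (0:ℝ) < k := by exact_mod_cast hk
  rw [wk_tri k hk (one_div_le_one_div_of_le hK (by linarith)) le_rfl]; ring

lemma wk_shift (k : ℕ) (hk : 1 ≤ k) (y : ℝ) : wk k (y + 1/(k:ℝ)) = - wk k y := by
  have h1 : wk k (y + 1/(k:ℝ)) = wk k (1/(k:ℝ)) + ∫ t in (1/(k:ℝ))..(y + 1/(k:ℝ)), uk k t := by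
    rw [wk, wk, intervalIntegral.integral_add_adjacent_intervals (uk_int k _ _) (uk_int k _ _)]
  have h2 : (∫ t in (0:ℝ)..y, uk k (t + 1/(k:ℝ)))
      = ∫ t in (1/(k:ℝ))..(y + 1/(k:ℝ)), uk k t := by
    rw [intervalIntegral.integral_comp_add_right (fun t => uk k t)]
    norm_num
  rw [h1, wk_perk k hk, ← h2, zero_add]
  simp_rw [uk_shift k hk]
  rw [intervalIntegral.integral_neg, wk]

lemma wk_shift_nat (k : ℕ) (hk : 1 ≤ k) (j : ℕ) (y : ℝ) :
    wk k (y + (j:ℝ)/(k:ℝ)) = (-1:ℝ)^j * wk k y := by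
  induction j with
  | zero => simp
  | succ n ih =>
    have h : y + (((n:ℕ)+1:ℕ):ℝ)/(k:ℝ) = (y + (n:ℝ)/(k:ℝ)) + 1/(k:ℝ) := by push_cast; ring
    rw [h, wk_shift k hk, ih, pow_succ]
    ring

lemma piece (k : ℕ) (hk : 1 ≤ k) (j : ℕ) :
    (∫ y in ((j:ℝ)/(k:ℝ))..((((j+1):ℕ):ℝ)/(k:ℝ)), (wk k y)^2)
      = ∫ y in (0:ℝ)..(1/(k:ℝ)), (wk k y)^2 := by
  have key := intervalIntegral.integral_comp_add_right (a := (0:ℝ)) (b := 1/(k:ℝ))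
    (fun y => (wk k y)^2) ((j:ℝ)/(k:ℝ))
  have e1 : (0:ℝ) + (j:ℝ)/(k:ℝ) = ((j:ℕ):ℝ)/(k:ℝ) := by push_cast; ring
  have e2 : 1/(k:ℝ) + (j:ℝ)/(k:ℝ) = ((((j+1)):ℕ):ℝ)/(k:ℝ) := by push_cast; ring
  rw [e1, e2] at key
  rw [← key]
  apply intervalIntegral.integral_congr
  intro y _
  simp only
  rw [wk_shift_nat k hk j y, mul_pow, ← pow_mul, mul_comm j 2, pow_mul]
  norm_num

lemma total (k : ℕ) (hk : 1 ≤ k) :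
    (∫ y in (0:ℝ)..1, (wk k y)^2) = k * ∫ y in (0:ℝ)..(1/(k:ℝ)), (wk k y)^2 := by
  have hK : (0:ℝ) < k := by exact_mod_cast hk
  have hsum := intervalIntegral.sum_integral_adjacent_intervals
    (a := fun i : ℕ => (i:ℝ)/(k:ℝ)) (f := fun y => (wk k y)^2) (μ := volume) (n := k)
    (fun i _ => wk_sq_int k _ _)
  simp only [Nat.cast_zero, zero_div] at hsum
  rw [div_self (ne_of_gt hK)] at hsum
  rw [← hsum, Finset.sum_congr rfl (fun i _ => piece k hk i), Finset.sum_const,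
    Finset.card_range, nsmul_eq_mul]

lemma period_int (k : ℕ) (hk : 1 ≤ k) :
    (∫ y in (0:ℝ)..(1/(k:ℝ)), (wk k y)^2) = 1/(12*(k:ℝ)^3) := by
  have hK : (0:ℝ) < k := by exact_mod_cast hk
  have hhalf : 1/(2*(k:ℝ)) ≤ 1/(k:ℝ) := one_div_le_one_div_of_le hK (by linarith)
  have hsplit : (∫ y in (0:ℝ)..(1/(k:ℝ)), (wk k y)^2)
      = (∫ y in (0:ℝ)..(1/(2*(k:ℝ))), (wk k y)^2)
        + ∫ y in (1/(2*(k:ℝ)))..(1/(k:ℝ)), (wk k y)^2 :=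
    (intervalIntegral.integral_add_adjacent_intervals (wk_sq_int k _ _) (wk_sq_int k _ _)).symm
  have h1 : (∫ y in (0:ℝ)..(1/(2*(k:ℝ))), (wk k y)^2)
      = ∫ y in (0:ℝ)..(1/(2*(k:ℝ))), y^2 := by
    apply intervalIntegral.integral_congr
    intro y hy
    rw [Set.uIcc_of_le (by positivity)] at hy
    simp only
    rw [wk_id k hk hy.1 hy.2]
  have h2 : (∫ y in (1/(2*(k:ℝ)))..(1/(k:ℝ)), (wk k y)^2)
      = ∫ y in (1/(2*(k:ℝ)))..(1/(k:ℝ)), (1/(k:ℝ) - y)^2 := by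
    apply intervalIntegral.integral_congr
    intro y hy
    rw [Set.uIcc_of_le hhalf] at hy
    simp only
    rw [wk_tri k hk hy.1 hy.2]
  have h3 : (∫ y in (1/(2*(k:ℝ)))..(1/(k:ℝ)), (1/(k:ℝ) - y)^2)
      = ∫ y in (1/(k:ℝ) - 1/(k:ℝ))..(1/(k:ℝ) - 1/(2*(k:ℝ))), y^2 :=
    intervalIntegral.integral_comp_sub_left (fun y => y^2) (1/(k:ℝ))
  have e1 : 1/(k:ℝ) - 1/(k:ℝ) = 0 := by ring
  have e2 : 1/(k:ℝ) - 1/(2*(k:ℝ)) = 1/(2*(k:ℝ)) := by field_simp; ring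
  rw [hsplit, h1, h2, h3, e1, e2, integral_pow]
  field_simp
  ring_nf
  field_simp

/-- `∫₀¹ w_k² = 1/(12k²)`, hence `E₀^γ(u_k) = k + γ/(12k²)` for all `γ ≥ 0`. -/
theorem stmt1 (k : ℕ) (hk : 1 ≤ k) :
    (∫ y in (0 : ℝ)..1, (wk k y) ^ 2) = 1 / (12 * (k : ℝ) ^ 2) ∧
    ∀ γ : ℝ, 0 ≤ γ →
      (k : ℝ) + γ * ∫ y in (0 : ℝ)..1, (wk k y) ^ 2 = (k : ℝ) + γ / (12 * (k : ℝ) ^ 2) := by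

  have hK : (0:ℝ) < k := by exact_mod_cast hk
  have h1 : (∫ y in (0 : ℝ)..1, (wk k y) ^ 2) = 1 / (12 * (k : ℝ) ^ 2) := by
    rw [total k hk, period_int k hk]
    field_simp
  exact ⟨h1, fun γ _ => by rw [h1]; ring⟩
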